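/- Consider the semidefinite program: maximize (1/2)⟨σ₀, P₀⟩ + (1/2)⟨σ₁, P₁⟩ over density matrices σ₀ on G ⊗ B = ℂ² ⊗ ℂ³ and σ₁ on Y ⊗ B = ℂ² ⊗ ℂ³, subject to Tr_G(σ₀) = Tr_Y(σ₁), where P₀ = |0⟩⟨0|_G ⊗ (|0⟩⟨0|+|1⟩⟨1|)_B + |1⟩⟨1|_G ⊗ |2⟩⟨2|_B and P₁ = Σ_{y∈{0,1}} |y⟩⟨y|_Y ⊗ |φ_y⟩⟨φ_y|_B. Its optimal value v satisfies 0.933 ≤ v ≤ 0.9331. (This is Alice's optimal cheating probability in the stochastic-switch Rabin oblivious transfer protocol, variant 1: her best average probability of correctly guessing whether Bob received the bit or ⊥ when Bob measures, and of passing Bob's verification test when he tests.) -/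

import Mathlib

/-! STATEMENT 12: Alice's optimal cheating probability in the stochastic-switch Rabin oblivious transfer protocol (variant 1) lies in [0.933, 0.9331]. -/

open Matrix
open scoped Matrix BigOperators ComplexOrder

noncomputable section

/-- Square matrices over ℂ indexed by `α`. -/
abbrev Mat (α : Type) : Type := Matrix α α ℂ

/-- A density matrix: positive semidefinite with unit trace. -/
def IsDensity {α : Type} [Fintype α] [DecidableEq α] (ρ : Mat α) : Prop :=
  ρ.PosSemidef ∧ ρ.trace = 1

/-- Hilbert–Schmidt inner product ⟨P, Q⟩ = Tr(P† Q). -/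
def hs {α : Type} [Fintype α] (P Q : Mat α) : ℂ := (Pᴴ * Q).trace

/-- Outer product |v⟩⟨v|. -/
def outer {α : Type} (v : α → ℂ) : Mat α := fun i j => v i * star (v j)

/-- Standard basis vector |i⟩. -/
def ket {α : Type} [DecidableEq α] (i : α) : α → ℂ := fun j => if j = i then 1 else 0

/-- The embedding of Fin 2 into Fin 3. -/
def f23 (y : Fin 2) : Fin 3 := ⟨y.val, by omega⟩

/-- |φ_y⟩ = (|yy⟩ + |22⟩)/√2 ∈ ℂ³ ⊗ ℂ³. -/
def phi (y : Fin 2) : Fin 3 × Fin 3 → ℂ :=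
  fun p => (ket (f23 y, f23 y) p + ket ((2 : Fin 3), (2 : Fin 3)) p) / (Real.sqrt 2 : ℂ)

/-- Partial trace over the first tensor factor. -/
def ptrA {α β : Type} [Fintype α] (ρ : Mat (α × β)) : Mat β :=
  fun b b' => ∑ a, ρ (a, b) (a, b')

/-- Single-qutrit |φ_y⟩ = (|y⟩ + |⊥⟩)/√2, with |⊥⟩ = |2⟩. -/
def phi1 (y : Fin 2) : Fin 3 → ℂ :=
  fun b => (ket (f23 y) b + ket (2 : Fin 3) b) / (Real.sqrt 2 : ℂ)

/-- P₀ = |0⟩⟨0|_G ⊗ (|0⟩⟨0|+|1⟩⟨1|)_B + |1⟩⟨1|_G ⊗ |2⟩⟨2|_B. -/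
def P0r : Mat (Fin 2 × Fin 3) := fun p q =>
  ket (0 : Fin 2) p.1 * star (ket (0 : Fin 2) q.1) *
    (ket (0 : Fin 3) p.2 * star (ket (0 : Fin 3) q.2)
      + ket (1 : Fin 3) p.2 * star (ket (1 : Fin 3) q.2))
  + ket (1 : Fin 2) p.1 * star (ket (1 : Fin 2) q.1) *
    (ket (2 : Fin 3) p.2 * star (ket (2 : Fin 3) q.2))

/-- P₁ = Σ_y |y⟩⟨y|_Y ⊗ |φ_y⟩⟨φ_y|_B. -/
def P1r : Mat (Fin 2 × Fin 3) := fun p q =>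
  ∑ y : Fin 2, ket y p.1 * star (ket y q.1) * (phi1 y p.2 * star (phi1 y q.2))

namespace Cheat

abbrev Q3 := Matrix (Fin 3) (Fin 3) ℚ
abbrev C3 := Mat (Fin 3)

def rmat (M : Q3) : C3 := M.map (fun q => (q : ℂ))

def dvecC (d : Fin 3 → ℚ) : C3 := Matrix.diagonal (fun i => ((d i : ℂ)))

def cert (L : Q3) (d : Fin 3 → ℚ) : C3 := (rmat L)ᴴ * dvecC d * rmat L

lemma cert_psd (L : Q3) (d : Fin 3 → ℚ) (hd : ∀ i, 0 ≤ d i) : (cert L d).PosSemidef := by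
  apply Matrix.PosSemidef.conjTranspose_mul_mul_same
  refine Matrix.posSemidef_diagonal_iff.mpr fun i => ?_
  have : ((d i : ℂ)) = ((d i : ℝ) : ℂ) := by push_cast; ring
  rw [this, Complex.zero_le_real]
  exact_mod_cast hd i

lemma cert_apply (L : Q3) (d : Fin 3 → ℚ) (i j : Fin 3) :
    cert L d i j = ∑ r, ((L r i : ℂ)) * ((d r : ℂ)) * ((L r j : ℂ)) := by
  simp [cert, Matrix.mul_apply, rmat, dvecC, Matrix.diagonal_apply, Matrix.conjTranspose_apply,
    Matrix.map_apply, star_ratCast, mul_ite, ite_mul, mul_zero, zero_mul, Finset.sum_ite_eq,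
    Finset.sum_ite_eq']

def bd (M0 M1 : C3) : Mat (Fin 2 × Fin 3) := fun p q =>
  if p.1 = q.1 then (if p.1 = 0 then M0 p.2 q.2 else M1 p.2 q.2) else 0

lemma bd_sub (M0 M1 N0 N1 : C3) : bd M0 M1 - bd N0 N1 = bd (M0 - N0) (M1 - N1) := by
  ext ⟨a, b⟩ ⟨c, d⟩
  simp only [bd, Matrix.sub_apply]
  split_ifs <;> simp

lemma bd_mul (M0 M1 N0 N1 : C3) : bd M0 M1 * bd N0 N1 = bd (M0 * N0) (M1 * N1) := by
  ext ⟨a, b⟩ ⟨c, d⟩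
  fin_cases a <;> fin_cases c <;>
    simp [bd, Matrix.mul_apply, Fintype.sum_prod_type, Fin.sum_univ_two]

lemma trace_ptrA {σ : Mat (Fin 2 × Fin 3)} : (ptrA σ).trace = σ.trace := by
  simp only [ptrA, Matrix.trace, Matrix.diag, Fintype.sum_prod_type]
  rw [Finset.sum_comm]

lemma ptrA_bd (M0 M1 : C3) : ptrA (bd M0 M1) = M0 + M1 := by
  ext b d
  simp [ptrA, bd, Fin.sum_univ_two]

lemma bd_psd {M0 M1 : C3} (h0 : M0.PosSemidef) (h1 : M1.PosSemidef) :
    (bd M0 M1).PosSemidef := by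
  refine Matrix.PosSemidef.of_dotProduct_mulVec_nonneg ?_ ?_
  · ext ⟨a, b⟩ ⟨c, d⟩
    have e0 := congr_fun (congr_fun h0.1 b) d
    have e1 := congr_fun (congr_fun h1.1 b) d
    simp only [Matrix.conjTranspose_apply] at e0 e1
    by_cases h : a = c
    · subst h
      by_cases h2 : a = 0 <;> simp [bd, Matrix.conjTranspose_apply, h2, e0, e1]
    · simp [bd, Matrix.conjTranspose_apply, h, Ne.symm h]
  · intro x
    have key : star x ⬝ᵥ (bd M0 M1) *ᵥ x
        = (star (fun b => x (0, b)) ⬝ᵥ M0 *ᵥ (fun b => x (0, b)))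
        + (star (fun b => x (1, b)) ⬝ᵥ M1 *ᵥ (fun b => x (1, b))) := by
      simp [bd, dotProduct, Matrix.mulVec, Fintype.sum_prod_type, Fin.sum_univ_two,
        Fin.sum_univ_three]
    rw [key]
    exact add_nonneg (h0.dotProduct_mulVec_nonneg _) (h1.dotProduct_mulVec_nonneg _)

lemma ptrA_psd {σ : Mat (Fin 2 × Fin 3)} (h : σ.PosSemidef) : (ptrA σ).PosSemidef := by
  refine Matrix.PosSemidef.of_dotProduct_mulVec_nonneg ?_ ?_
  · ext b d
    simp only [Matrix.conjTranspose_apply, ptrA, star_sum]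
    exact Finset.sum_congr rfl fun a _ => congr_fun (congr_fun h.1 (a, b)) (a, d)
  · intro y
    have key : star y ⬝ᵥ (ptrA σ) *ᵥ y
        = ∑ a : Fin 2, (star (fun p : Fin 2 × Fin 3 => if p.1 = a then y p.2 else 0) ⬝ᵥ
            σ *ᵥ (fun p : Fin 2 × Fin 3 => if p.1 = a then y p.2 else 0)) := by
      simp [ptrA, dotProduct, Matrix.mulVec, Fintype.sum_prod_type, Fin.sum_univ_two,
        Fin.sum_univ_three]
      ring
    rw [key]
    exact Finset.sum_nonneg fun a _ => h.dotProduct_mulVec_nonneg _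

lemma trace_mul_bd (σ : Mat (Fin 2 × Fin 3)) (A : C3) :
    (σ * bd A A).trace = ((ptrA σ) * A).trace := by
  simp [Matrix.trace, Matrix.diag, Matrix.mul_apply, ptrA, bd, Fintype.sum_prod_type,
    Fin.sum_univ_two, Fin.sum_univ_three]
  ring

lemma trace_re_nonneg {α : Type} [Fintype α] [DecidableEq α] {M : Mat α}
    (hM : M.PosSemidef) : 0 ≤ M.trace.re := by
  have h1 : ∀ p, 0 ≤ (M p p).re := by
    intro p
    have := hM.dotProduct_mulVec_nonneg (Pi.single p 1)
    have h2 : star (Pi.single p 1 : α → ℂ) ⬝ᵥ M *ᵥ (Pi.single p 1) = M p p := by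
      simp [dotProduct, Matrix.mulVec, Pi.single_apply, Finset.mul_sum,
        apply_ite, mul_ite, ite_mul]
    rw [h2] at this
    exact (Complex.le_def.mp this).1
  rw [Matrix.trace]
  rw [Complex.re_sum]
  exact Finset.sum_nonneg fun p _ => h1 p

lemma trace_mul_re_nonneg {α : Type} [Fintype α] [DecidableEq α] {P Q : Mat α}
    (hP : P.PosSemidef) (hQ : Q.PosSemidef) : 0 ≤ (P * Q).trace.re := by
  open MatrixOrder in
  obtain ⟨B, hB⟩ := CStarAlgebra.nonneg_iff_eq_star_mul_self.mp hP.nonneg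
  rw [hB, star_eq_conjTranspose, Matrix.mul_assoc, Matrix.trace_mul_comm]
  have h2 := trace_re_nonneg (hQ.conjTranspose_mul_mul_same Bᴴ)
  rw [conjTranspose_conjTranspose] at h2
  exact h2

def Pi01q : Q3 := !![1,0,0; 0,1,0; 0,0,0]
def E22q : Q3 := !![0,0,0; 0,0,0; 0,0,1]
def Phi0q : Q3 := !![1/2,0,1/2; 0,0,0; 1/2,0,1/2]
def Phi1q : Q3 := !![0,0,0; 0,1/2,1/2; 0,1/2,1/2]

def Aq : Q3 := !![530187/500000,15091/250000,-2601/10000; 15091/250000,530187/500000,-2601/10000; -2601/10000,-2601/10000,560369/500000]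
def Bq : Q3 := !![608689/1000000,-128599/500000,351481/1000000; -128599/500000,608689/1000000,351481/1000000; 351481/1000000,351481/1000000,702973/1000000]
def Sq : Q3 := !![197137/1000000,98417/500000,-91381/1000000; 98417/500000,197137/1000000,-91381/1000000; -91381/1000000,-91381/1000000,42489/1000000]

def M1U : Q3 := !![1,30182/30187,-130050/30187; 0,1,-43350/20123; 0,0,1]
def M1d : Fin 3 → ℚ := ![30187/500000,60369/3018700000,970387/10061500000]
def M2U : Q3 := !![1,30182/530187,-43350/176729; 0,1,-130050/560369; 0,0,1]
def M2d : Fin 3 → ℚ := ![530187/500000,56037460369/53018700000,2911161/280184500000]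
def M3U : Q3 := !![1,-257198/108689,-21217/15527; 0,1,3328647/6987517; 0,0,1]
def M3d : Fin 3 → ℚ := ![108689/1000000,6987517/108689000000,93435627/6987517000000]
def M4U : Q3 := !![1,-257198/608689,351481/608689; 0,1,-1671353/6987517; 0,0,1]
def M4d : Fin 3 → ℚ := ![608689/1000000,6987517/608689000000,93435627/6987517000000]
def M5U : Q3 := !![1,196834/197137,-91381/197137; 0,1,-91381/393971; 0,0,1]
def M5d : Fin 3 → ℚ := ![197137/1000000,119373213/197137000000,38459497/393971000000]

set_option maxHeartbeats 1000000 in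
lemma certA0 : rmat Aq - rmat Pi01q = cert M1U M1d := by
  ext i j
  fin_cases i <;> fin_cases j <;>
    simp [cert_apply, rmat, Aq, Bq, Sq, Pi01q, E22q, Phi0q, Phi1q, M1U, M1d,
      Fin.sum_univ_three, Matrix.vecHead, Matrix.vecTail] <;> norm_num

set_option maxHeartbeats 1000000 in
lemma certA1 : rmat Aq - rmat E22q = cert M2U M2d := by
  ext i j
  fin_cases i <;> fin_cases j <;>
    simp [cert_apply, rmat, Aq, Bq, Sq, Pi01q, E22q, Phi0q, Phi1q, M2U, M2d,
      Fin.sum_univ_three, Matrix.vecHead, Matrix.vecTail] <;> norm_num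

set_option maxHeartbeats 1000000 in
lemma certB0 : rmat Bq - rmat Phi0q = cert M3U M3d := by
  ext i j
  fin_cases i <;> fin_cases j <;>
    simp [cert_apply, rmat, Aq, Bq, Sq, Pi01q, E22q, Phi0q, Phi1q, M3U, M3d,
      Fin.sum_univ_three, Matrix.vecHead, Matrix.vecTail] <;> norm_num

set_option maxHeartbeats 1000000 in
lemma certB1 : rmat Bq - rmat Phi1q = cert M4U M4d := by
  ext i j
  fin_cases i <;> fin_cases j <;>
    simp [cert_apply, rmat, Aq, Bq, Sq, Pi01q, E22q, Phi0q, Phi1q, M4U, M4d,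
      Fin.sum_univ_three, Matrix.vecHead, Matrix.vecTail] <;> norm_num

set_option maxHeartbeats 1000000 in
lemma certS : rmat Sq = cert M5U M5d := by
  ext i j
  fin_cases i <;> fin_cases j <;>
    simp [cert_apply, rmat, Aq, Bq, Sq, Pi01q, E22q, Phi0q, Phi1q, M5U, M5d,
      Fin.sum_univ_three, Matrix.vecHead, Matrix.vecTail] <;> norm_num


lemma sqrt2_sq : ((Real.sqrt 2 : ℝ) : ℂ) * ((Real.sqrt 2 : ℝ) : ℂ) = 2 := by
  rw [← Complex.ofReal_mul, Real.mul_self_sqrt (by norm_num)]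
  norm_num

set_option maxHeartbeats 1000000 in
lemma P0r_eq : P0r = bd (rmat Pi01q) (rmat E22q) := by
  ext ⟨a, b⟩ ⟨c, d⟩
  fin_cases a <;> fin_cases c <;> fin_cases b <;> fin_cases d <;>
    simp [P0r, bd, ket, rmat, Pi01q, E22q, Matrix.vecHead, Matrix.vecTail]

set_option maxHeartbeats 1000000 in
lemma P1r_eq : P1r = bd (rmat Phi0q) (rmat Phi1q) := by
  have h2 := sqrt2_sq
  ext ⟨a, b⟩ ⟨c, d⟩
  fin_cases a <;> fin_cases c <;> fin_cases b <;> fin_cases d <;>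
    simp [P1r, bd, ket, phi1, f23, rmat, Phi0q, Phi1q, Fin.sum_univ_two,
      Matrix.vecHead, Matrix.vecTail, div_mul_div_comm] <;>
    rw [← mul_inv, show ((Real.sqrt 2:ℝ):ℂ) * ((Real.sqrt 2:ℝ):ℂ) = 2 from h2]

lemma trace_bd (M0 M1 : C3) : (bd M0 M1).trace = M0.trace + M1.trace := by
  rw [← trace_ptrA, ptrA_bd, Matrix.trace_add]

lemma hA0 : (rmat Aq - rmat Pi01q).PosSemidef := by
  rw [certA0]; exact cert_psd _ _ (by intro i; fin_cases i <;> simp [M1d, Matrix.vecHead, Matrix.vecTail] <;> norm_num)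
lemma hA1 : (rmat Aq - rmat E22q).PosSemidef := by
  rw [certA1]; exact cert_psd _ _ (by intro i; fin_cases i <;> simp [M2d, Matrix.vecHead, Matrix.vecTail] <;> norm_num)
lemma hB0 : (rmat Bq - rmat Phi0q).PosSemidef := by
  rw [certB0]; exact cert_psd _ _ (by intro i; fin_cases i <;> simp [M3d, Matrix.vecHead, Matrix.vecTail] <;> norm_num)
lemma hB1 : (rmat Bq - rmat Phi1q).PosSemidef := by
  rw [certB1]; exact cert_psd _ _ (by intro i; fin_cases i <;> simp [M4d, Matrix.vecHead, Matrix.vecTail] <;> norm_num)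
lemma hSq : (rmat Sq).PosSemidef := by
  rw [certS]; exact cert_psd _ _ (by intro i; fin_cases i <;> simp [M5d, Matrix.vecHead, Matrix.vecTail] <;> norm_num)

set_option maxHeartbeats 1000000 in
lemma sum_ABS : rmat Aq + rmat Bq + rmat Sq = ((9331/5000 : ℝ) : ℂ) • (1 : C3) := by
  ext i j
  fin_cases i <;> fin_cases j <;>
    simp [rmat, Aq, Bq, Sq, Matrix.one_apply, Matrix.vecHead, Matrix.vecTail] <;> norm_num

lemma upper_bound (σ0 σ1 : Mat (Fin 2 × Fin 3)) (h0 : IsDensity σ0) (h1 : IsDensity σ1)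
    (hpt : ptrA σ0 = ptrA σ1) :
    ((1/2 : ℂ) * hs σ0 P0r + (1/2 : ℂ) * hs σ1 P1r).re ≤ (0.9331 : ℝ) := by
  have hτpsd : (ptrA σ0).PosSemidef := ptrA_psd h0.1
  have hτtr : (ptrA σ0).trace = 1 := by rw [trace_ptrA, h0.2]
  -- σ0 bound
  have hdiff0 : (bd (rmat Aq) (rmat Aq) - P0r).PosSemidef := by
    rw [P0r_eq, bd_sub]; exact bd_psd hA0 hA1
  have hb0 : (σ0 * P0r).trace.re ≤ ((ptrA σ0) * rmat Aq).trace.re := by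
    have h := trace_mul_re_nonneg h0.1 hdiff0
    rw [Matrix.mul_sub, Matrix.trace_sub, Complex.sub_re, trace_mul_bd σ0 (rmat Aq)] at h
    linarith
  -- σ1 bound
  have hdiff1 : (bd (rmat Bq) (rmat Bq) - P1r).PosSemidef := by
    rw [P1r_eq, bd_sub]; exact bd_psd hB0 hB1
  have hb1 : (σ1 * P1r).trace.re ≤ ((ptrA σ0) * rmat Bq).trace.re := by
    have h := trace_mul_re_nonneg h1.1 hdiff1
    rw [Matrix.mul_sub, Matrix.trace_sub, Complex.sub_re, trace_mul_bd σ1 (rmat Bq), ← hpt] at h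
    linarith
  -- combine with slack
  have hsum : ((ptrA σ0) * rmat Aq).trace + ((ptrA σ0) * rmat Bq).trace
      + ((ptrA σ0) * rmat Sq).trace = ((9331/5000 : ℝ) : ℂ) := by
    have h1' : ((ptrA σ0) * rmat Aq).trace + ((ptrA σ0) * rmat Bq).trace
        + ((ptrA σ0) * rmat Sq).trace
        = ((ptrA σ0) * (rmat Aq + rmat Bq + rmat Sq)).trace := by
      rw [Matrix.mul_add, Matrix.mul_add, Matrix.trace_add, Matrix.trace_add]
    rw [h1', sum_ABS, Matrix.mul_smul, Matrix.mul_one, Matrix.trace_smul, hτtr, smul_eq_mul,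
      mul_one]
  have hSnn : 0 ≤ ((ptrA σ0) * rmat Sq).trace.re := trace_mul_re_nonneg hτpsd hSq
  have hre : ((ptrA σ0) * rmat Aq).trace.re + ((ptrA σ0) * rmat Bq).trace.re
      + ((ptrA σ0) * rmat Sq).trace.re = (9331/5000 : ℝ) := by
    have := congrArg Complex.re hsum
    simpa [Complex.add_re] using this
  have e0 : hs σ0 P0r = (σ0 * P0r).trace := by rw [hs, h0.1.1]
  have e1 : hs σ1 P1r = (σ1 * P1r).trace := by rw [hs, h1.1.1]
  have ere : ((1/2 : ℂ) * hs σ0 P0r + (1/2 : ℂ) * hs σ1 P1r).re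
      = (σ0 * P0r).trace.re / 2 + (σ1 * P1r).trace.re / 2 := by
    rw [e0, e1]
    simp [Complex.add_re, Complex.mul_re]
    ring
  rw [ere]
  have : (0.9331 : ℝ) = 9331 / 10000 := by norm_num
  linarith

def p0v : Q3 := !![197/500, -197/500, 0; 0,0,0; 0,0,0]
def p1v : Q3 := !![183/1000, 183/1000, 789/1000; 0,0,0; 0,0,0]
def q0v : Q3 := !![2342437/5741000, -856843/5741000, 3202551/5741000; 0,0,0; 0,0,0]
def q1v : Q3 := !![-428133/2870500, 1171113/2870500, 160167/287050; 0,0,0; 0,0,0]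
def tdv : Fin 3 → ℚ := ![1000000/999971, 0, 0]

lemma tdv_nonneg : ∀ i, 0 ≤ tdv i := by
  intro i; fin_cases i <;> simp [tdv, Matrix.vecHead, Matrix.vecTail] <;> norm_num

def sig0 : Mat (Fin 2 × Fin 3) := bd (cert p0v tdv) (cert p1v tdv)
def sig1 : Mat (Fin 2 × Fin 3) := bd (cert q0v tdv) (cert q1v tdv)

lemma sig0_psd : sig0.PosSemidef := bd_psd (cert_psd _ _ tdv_nonneg) (cert_psd _ _ tdv_nonneg)
lemma sig1_psd : sig1.PosSemidef := bd_psd (cert_psd _ _ tdv_nonneg) (cert_psd _ _ tdv_nonneg)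

set_option maxHeartbeats 1000000 in
lemma ptr_blocks_eq : cert p0v tdv + cert p1v tdv = cert q0v tdv + cert q1v tdv := by
  ext i j
  fin_cases i <;> fin_cases j <;>
    simp [cert_apply, p0v, p1v, q0v, q1v, tdv, Fin.sum_univ_three,
      Matrix.vecHead, Matrix.vecTail] <;> norm_num

lemma sig_ptr : ptrA sig0 = ptrA sig1 := by
  rw [sig0, sig1, ptrA_bd, ptrA_bd, ptr_blocks_eq]

set_option maxHeartbeats 1000000 in
lemma sig0_trace : sig0.trace = 1 := by
  rw [sig0, trace_bd]
  simp [Matrix.trace, Matrix.diag, cert_apply, p0v, p1v, tdv, Fin.sum_univ_three,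
    Matrix.vecHead, Matrix.vecTail]
  norm_num

set_option maxHeartbeats 1000000 in
lemma sig1_trace : sig1.trace = 1 := by
  rw [sig1, trace_bd]
  simp [Matrix.trace, Matrix.diag, cert_apply, q0v, q1v, tdv, Fin.sum_univ_three,
    Matrix.vecHead, Matrix.vecTail]
  norm_num

set_option maxHeartbeats 1000000 in
lemma hs0_val : hs sig0 P0r = ((932993/999971 : ℝ) : ℂ) := by
  rw [hs, sig0_psd.1, P0r_eq, sig0, bd_mul, trace_bd]
  simp [Matrix.trace, Matrix.diag, Matrix.mul_apply, cert_apply, rmat, p0v, p1v, tdv,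
    Pi01q, E22q, Fin.sum_univ_three, Matrix.vecHead, Matrix.vecTail]
  norm_num

set_option maxHeartbeats 4000000 in
lemma hs1_val : hs sig1 P1r = ((30750097090250/32958125186651 : ℝ) : ℂ) := by
  rw [hs, sig1_psd.1, P1r_eq, sig1, bd_mul, trace_bd]
  simp [Matrix.trace, Matrix.diag, Matrix.mul_apply, cert_apply, rmat, q0v, q1v, tdv,
    Phi0q, Phi1q, Fin.sum_univ_three, Matrix.vecHead, Matrix.vecTail]
  norm_num

lemma witness_val : ((1/2 : ℂ) * hs sig0 P0r + (1/2 : ℂ) * hs sig1 P1r).re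
    = ((61500688949683/65916250373302 : ℝ)) := by
  rw [hs0_val, hs1_val]
  have : ((1/2 : ℂ) * ((932993/999971 : ℝ) : ℂ) + (1/2 : ℂ) * ((30750097090250/32958125186651 : ℝ) : ℂ))
      = ((61500688949683/65916250373302 : ℝ) : ℂ) := by
    push_cast
    norm_num
  rw [this, Complex.ofReal_re]

end Cheat

open Cheat in
theorem rabin_ot_variant1_cheating_Alice :
    ∃ v : ℝ,
      IsLUB
        {x : ℝ | ∃ σ0 σ1 : Mat (Fin 2 × Fin 3),
          IsDensity σ0 ∧ IsDensity σ1 ∧ ptrA σ0 = ptrA σ1 ∧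
          x = ((1/2 : ℂ) * hs σ0 P0r + (1/2 : ℂ) * hs σ1 P1r).re}
        v
      ∧ (0.933 : ℝ) ≤ v ∧ v ≤ (0.9331 : ℝ) := by
  set S := {x : ℝ | ∃ σ0 σ1 : Mat (Fin 2 × Fin 3),
      IsDensity σ0 ∧ IsDensity σ1 ∧ ptrA σ0 = ptrA σ1 ∧
      x = ((1/2 : ℂ) * hs σ0 P0r + (1/2 : ℂ) * hs σ1 P1r).re} with hSdef
  have hub : ∀ x ∈ S, x ≤ (0.9331 : ℝ) := by
    rintro x ⟨σ0, σ1, h0, h1, hpt, rfl⟩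
    exact upper_bound σ0 σ1 h0 h1 hpt
  have hmem : ((61500688949683/65916250373302 : ℝ)) ∈ S :=
    ⟨sig0, sig1, ⟨sig0_psd, sig0_trace⟩, ⟨sig1_psd, sig1_trace⟩, sig_ptr, witness_val.symm⟩
  have hne : S.Nonempty := ⟨_, hmem⟩
  have hbdd : BddAbove S := ⟨(0.9331 : ℝ), fun x hx => hub x hx⟩
  have hlub := isLUB_csSup hne hbdd
  refine ⟨sSup S, hlub, ?_, ?_⟩
  · have h1 : (0.933 : ℝ) ≤ ((61500688949683/65916250373302 : ℝ)) := by norm_num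
    exact h1.trans (hlub.1 hmem)
  · exact hlub.2 fun x hx => hub x hx

end
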